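/- Let (σ_n)_{n∈ℕ} be a sequence of positive reals with σ_n > 2^n/√(2π) for each n, let μ_n = γ_{(0,σ_n)} be the centered Gaussian measure on ℝ with standard deviation σ_n, and let μ = ∏_{n∈ℕ} μ_n be the infinite product probability measure on ℝ^ℕ. Then for every h = (h_n)_{n∈ℕ} ∈ ℝ^ℕ, μ((limsup_{n→∞} E_n) + h) = 0, where E_n = {x ∈ ℝ^ℕ : x_n ∈ [-1/2, 1/2]} and limsup_{n→∞} E_n = ⋂_{n=1}^∞ ⋃_{k=n}^∞ E_k. -/

import Mathlib

open MeasureTheory ProbabilityTheory Filter Set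
open scoped ENNReal NNReal

/-- The cylinder set `E n = {x ∈ ℝ^ℕ : x n ∈ [-1/2, 1/2]}`. -/
def cylE (n : ℕ) : Set (ℕ → ℝ) := {x : ℕ → ℝ | x n ∈ Set.Icc (-(1/2) : ℝ) (1/2)}

/-- Let `σ n > 2^n / √(2π)`, let `μ n = γ_{(0, σ n)}`, and let `μ` be the infinite product
probability measure on `ℝ^ℕ` (characterized by its finite-dimensional marginals being the
corresponding finite products). Then for every `h ∈ ℝ^ℕ`,
`μ ((limsup E n) + h) = 0`, where `limsup E n = ⋂_{n ≥ 1} ⋃_{k ≥ n} E k`. -/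
theorem product_gaussian_limsup_translate_null
    (σ : ℕ → ℝ) (hσ : ∀ n, σ n > 2 ^ n / Real.sqrt (2 * Real.pi))
    (μ : Measure (ℕ → ℝ)) [IsProbabilityMeasure μ]
    (hμ : ∀ (s : Finset ℕ) (f : ℕ → Set ℝ), (∀ i, MeasurableSet (f i)) →
      μ {x : ℕ → ℝ | ∀ i ∈ s, x i ∈ f i} =
        ∏ i ∈ s, gaussianReal 0 ⟨(σ i) ^ 2, sq_nonneg (σ i)⟩ (f i))
    (h : ℕ → ℝ) :
    μ ((fun x => x + h) '' (⋂ n ∈ Set.Ici 1, ⋃ k ∈ Set.Ici n, cylE k)) = 0 := by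
  have hσpos : ∀ n, 0 < σ n := fun n =>
    lt_trans (div_pos (pow_pos two_pos n) (Real.sqrt_pos.2 Real.two_pi_pos)) (hσ n)
  set T : ℕ → Set (ℕ → ℝ) := fun k => {x : ℕ → ℝ | x k ∈ Set.Icc (h k - 1/2) (h k + 1/2)}
    with hT
  -- the translated limsup is contained in limsup T
  have hsub : (fun x => x + h) '' (⋂ n ∈ Set.Ici 1, ⋃ k ∈ Set.Ici n, cylE k)
      ⊆ limsup T atTop := by
    rintro _ ⟨x, hx, rfl⟩
    rw [limsup_eq_iInf_iSup_of_nat]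
    simp only [Set.iInf_eq_iInter, Set.iSup_eq_iUnion, mem_iInter, mem_iUnion, Set.mem_Ici] at hx ⊢
    intro n
    obtain ⟨k, hk, hxk⟩ := hx (max n 1) (le_max_right n 1)
    refine ⟨k, le_trans (le_max_left n 1) hk, ?_⟩
    simp only [cylE, Set.mem_setOf_eq, Set.mem_Icc] at hxk
    simp only [hT, Set.mem_setOf_eq, Set.mem_Icc, Pi.add_apply]
    constructor <;> linarith [hxk.1, hxk.2]
  refine measure_mono_null hsub (measure_limsup_atTop_eq_zero ?_)
  -- bound the measure of each T k
  have hbound : ∀ k, μ (T k) ≤ (1/2 : ℝ≥0∞) ^ k := by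
    intro k
    have hvk : (⟨(σ k) ^ 2, sq_nonneg (σ k)⟩ : ℝ≥0) ≠ 0 := by
      exact fun hc => (pow_ne_zero 2 (hσpos k).ne') (congrArg NNReal.toReal hc)
    have hμT : μ (T k) =
        gaussianReal 0 ⟨(σ k) ^ 2, sq_nonneg (σ k)⟩ (Set.Icc (h k - 1/2) (h k + 1/2)) := by
      have := hμ {k} (fun i => Set.Icc (h i - 1/2) (h i + 1/2)) (fun i => measurableSet_Icc)
      simpa [hT] using this
    rw [hμT, gaussianReal_apply _ hvk]
    have hptwise : ∀ x : ℝ, gaussianPDF 0 ⟨(σ k) ^ 2, sq_nonneg (σ k)⟩ x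
        ≤ ENNReal.ofReal ((Real.sqrt (2 * Real.pi) * σ k)⁻¹) := by
      intro x
      unfold gaussianPDF
      refine ENNReal.ofReal_le_ofReal ?_
      unfold gaussianPDFReal
      change (Real.sqrt (2 * Real.pi * σ k ^ 2))⁻¹ * Real.exp (-(x - 0) ^ 2 / (2 * (σ k ^ 2))) ≤ _
      rw [Real.sqrt_mul Real.two_pi_pos.le, Real.sqrt_sq (hσpos k).le]
      have h1 : Real.exp (-(x - 0) ^ 2 / (2 * (σ k ^ 2))) ≤ 1 := by
        rw [Real.exp_le_one_iff]
        have hv : (0:ℝ) < 2 * (σ k ^ 2) := by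
          have := hσpos k; positivity
        exact div_nonpos_of_nonpos_of_nonneg (neg_nonpos_of_nonneg (sq_nonneg _)) hv.le
      calc (Real.sqrt (2 * Real.pi) * σ k)⁻¹ * Real.exp _
          ≤ (Real.sqrt (2 * Real.pi) * σ k)⁻¹ * 1 := by
            refine mul_le_mul_of_nonneg_left h1 ?_
            have := hσpos k; positivity
        _ = (Real.sqrt (2 * Real.pi) * σ k)⁻¹ := mul_one _
    calc ∫⁻ x in Set.Icc (h k - 1/2) (h k + 1/2), gaussianPDF 0 ⟨(σ k) ^ 2, sq_nonneg (σ k)⟩ x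
        ≤ ∫⁻ _ in Set.Icc (h k - 1/2) (h k + 1/2),
            ENNReal.ofReal ((Real.sqrt (2 * Real.pi) * σ k)⁻¹) :=
          lintegral_mono fun x => hptwise x
      _ = ENNReal.ofReal ((Real.sqrt (2 * Real.pi) * σ k)⁻¹)
            * volume (Set.Icc (h k - 1/2) (h k + 1/2)) := setLIntegral_const _ _
      _ = ENNReal.ofReal ((Real.sqrt (2 * Real.pi) * σ k)⁻¹) := by
          rw [Real.volume_Icc]
          norm_num
      _ ≤ (1/2 : ℝ≥0∞) ^ k := by
          have h2k : (Real.sqrt (2 * Real.pi) * σ k)⁻¹ ≤ (1/2 : ℝ) ^ k := by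
            have hgt : (2:ℝ) ^ k < Real.sqrt (2 * Real.pi) * σ k := by
              have := hσ k
              rw [gt_iff_lt, div_lt_iff₀ (Real.sqrt_pos.2 Real.two_pi_pos)] at this
              linarith [this]
            rw [inv_le_comm₀ (mul_pos (Real.sqrt_pos.2 Real.two_pi_pos) (hσpos k)) (by positivity)]
            rw [one_div, inv_pow, inv_inv]
            exact hgt.le
          calc ENNReal.ofReal ((Real.sqrt (2 * Real.pi) * σ k)⁻¹)
              ≤ ENNReal.ofReal ((1/2 : ℝ) ^ k) := ENNReal.ofReal_le_ofReal h2k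
            _ = (1/2 : ℝ≥0∞) ^ k := by
                rw [ENNReal.ofReal_pow (by norm_num)]
                congr 1
                rw [one_div, one_div, ENNReal.ofReal_inv_of_pos (by norm_num)]
                norm_num
  refine ne_top_of_le_ne_top ?_ (ENNReal.tsum_le_tsum hbound)
  rw [ENNReal.tsum_geometric]
  exact ENNReal.inv_ne_top.2 (tsub_pos_of_lt (by norm_num : (1/2:ℝ≥0∞) < 1)).ne'
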